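/- (Rado's theorem) Let H be a matroid on ground set F, let D be a finite set, and let F(·) assign to each d ∈ D a subset F(d) ⊆ F so that the F(d) are pairwise disjoint and F = ⋃_{d∈D[F]} F(d), where D[F] = {d : F(d) ≠ ∅}. Then there exists a set I ⊆ F independent in H with |I ∩ F(d)| = 1 for every d ∈ D[F] (equivalently, a common independent set of the partition matroid and H of size |D[F]|) if and only if r_H(⋃_{d∈X} F(d)) ≥ |X| for every subset X ⊆ D[F]. -/

import Mathlib

open Finset
open scoped Classical

/-- A matroid on a finite ground type `U`, given by its independent sets. -/
structure FinMatroid (U : Type*) [DecidableEq U] [Fintype U] where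
  Indep : Finset U → Prop
  empty_indep : Indep ∅
  subset_indep : ∀ ⦃I J : Finset U⦄, I ⊆ J → Indep J → Indep I
  exchange : ∀ ⦃I J : Finset U⦄, Indep I → Indep J → I.card < J.card →
    ∃ u ∈ J, u ∉ I ∧ Indep (insert u I)

namespace FinMatroid

variable {U : Type*} [DecidableEq U] [Fintype U]

/-- A circuit: an inclusion-wise minimal dependent set. -/
def Circuit (M : FinMatroid U) (C : Finset U) : Prop :=
  ¬ M.Indep C ∧ ∀ D ⊂ C, M.Indep D

/-- `sp M I`: elements `u ∉ I` with `I + u` dependent. -/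
def sp (M : FinMatroid U) (I : Finset U) : Set U :=
  {u | u ∉ I ∧ ¬ M.Indep (insert u I)}

/-- The fundamental circuit of `u` for the independent set `I`
(for `u ∈ sp M I` this is the unique circuit contained in `I + u`). -/
noncomputable def fundC (M : FinMatroid U) (I : Finset U) (u : U) : Finset U :=
  (insert u I).filter (fun w => M.Indep ((insert u I).erase w))

/-- The rank of a set: maximum size of an independent subset. -/
noncomputable def rk (M : FinMatroid U) (X : Finset U) : ℕ :=
  ((X.powerset).filter (fun I => M.Indep I)).sup Finset.card

variable {M : FinMatroid U} {I X Y A B : Finset U}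

lemma card_le_rk (hI : M.Indep I) (hIX : I ⊆ X) : I.card ≤ M.rk X :=
  Finset.le_sup (by simp [Finset.mem_filter, Finset.mem_powerset, hI, hIX])

lemma rk_le_card : M.rk X ≤ X.card :=
  Finset.sup_le fun I hI => by
    simp only [Finset.mem_filter, Finset.mem_powerset] at hI
    exact Finset.card_le_card hI.1

lemma exists_basis (M : FinMatroid U) (X : Finset U) :
    ∃ B, B ⊆ X ∧ M.Indep B ∧ B.card = M.rk X := by
  have hne : ((X.powerset).filter (fun I => M.Indep I)).Nonempty :=
    ⟨∅, by simp [M.empty_indep]⟩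
  obtain ⟨B, hB, hBc⟩ := Finset.exists_mem_eq_sup _ hne Finset.card
  simp only [Finset.mem_filter, Finset.mem_powerset] at hB
  exact ⟨B, hB.1, hB.2, hBc.symm⟩

lemma exists_basis_superset (hI : M.Indep I) (hIX : I ⊆ X) :
    ∃ B, I ⊆ B ∧ B ⊆ X ∧ M.Indep B ∧ B.card = M.rk X := by
  suffices h : ∀ n (I : Finset U), M.Indep I → I ⊆ X → M.rk X ≤ I.card + n →
      ∃ B, I ⊆ B ∧ B ⊆ X ∧ M.Indep B ∧ M.rk X ≤ B.card by
    obtain ⟨B, h1, h2, h3, h4⟩ := h (M.rk X) I hI hIX (by omega)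
    exact ⟨B, h1, h2, h3, le_antisymm (card_le_rk h3 h2) h4⟩
  intro n
  induction n with
  | zero => intro I hI hIX h; exact ⟨I, subset_rfl, hIX, hI, by omega⟩
  | succ n ih =>
    intro I hI hIX h
    by_cases hle : M.rk X ≤ I.card
    · exact ⟨I, subset_rfl, hIX, hI, hle⟩
    · push_neg at hle
      obtain ⟨C, hCX, hCI, hCc⟩ := M.exists_basis X
      obtain ⟨u, huC, huI, hu⟩ := M.exchange hI hCI (by omega)
      obtain ⟨B, h1, h2, h3, h4⟩ := ih (insert u I) hu
        (insert_subset (hCX huC) hIX) (by rw [card_insert_of_notMem huI]; omega)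
      exact ⟨B, (subset_insert u I).trans h1, h2, h3, h4⟩

lemma indep_of_card_le_rk (h : X.card ≤ M.rk X) : M.Indep X := by
  obtain ⟨B, hBX, hBI, hBc⟩ := M.exists_basis X
  have : B = X := Finset.eq_of_subset_of_card_le hBX (by omega)
  rwa [← this]

lemma rk_mono (h : X ⊆ Y) : M.rk X ≤ M.rk Y := by
  obtain ⟨B, hBX, hBI, hBc⟩ := M.exists_basis X
  rw [← hBc]; exact card_le_rk hBI (hBX.trans h)

lemma rk_submodular (M : FinMatroid U) (A B : Finset U) :
    M.rk (A ∪ B) + M.rk (A ∩ B) ≤ M.rk A + M.rk B := by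
  obtain ⟨I, hIs, hII, hIc⟩ := M.exists_basis (A ∩ B)
  obtain ⟨J, hIJ, hJs, hJI, hJc⟩ := exists_basis_superset hII
    (hIs.trans inter_subset_union)
  have hJA : (J ∩ A).card ≤ M.rk A := card_le_rk (M.subset_indep inter_subset_left hJI) inter_subset_right
  have hJB : (J ∩ B).card ≤ M.rk B := card_le_rk (M.subset_indep inter_subset_left hJI) inter_subset_right
  have hunion : (J ∩ A) ∪ (J ∩ B) = J := by
    rw [← inter_union_distrib_left]; exact inter_eq_left.2 hJs
  have hinter : (J ∩ A) ∩ (J ∩ B) = J ∩ (A ∩ B) := by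
    ext u; simp; tauto
  have hcard : (J ∩ A).card + (J ∩ B).card = J.card + (J ∩ (A ∩ B)).card := by
    rw [← card_union_add_card_inter, hunion, hinter]
  have hIsub : I ⊆ J ∩ (A ∩ B) := subset_inter hIJ hIs
  have h1 : M.rk (A ∩ B) ≤ (J ∩ (A ∩ B)).card := hIc ▸ card_le_card hIsub
  have h2 : (J ∩ (A ∩ B)).card ≤ M.rk (A ∩ B) :=
    card_le_rk (M.subset_indep inter_subset_left hJI) inter_subset_right
  omega


end FinMatroid

variable {U : Type*} [DecidableEq U] [Fintype U]

/-- Independence predicate of the restriction of an independence system to `X`. -/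
def RestrictIndep (Ind : Finset U → Prop) (X : Finset U) (I : Finset U) : Prop :=
  I ⊆ X ∧ Ind I

/-- Rank function associated with an independence predicate. -/
noncomputable def rkOf (Ind : Finset U → Prop) (X : Finset U) : ℕ :=
  ((X.powerset).filter Ind).sup Finset.card

/-- Independence predicate of the contraction by `X`:
`I ⊆ U \ X` is independent iff `r(I ∪ X) - r(X) = |I|`. -/
def ContractIndepOf (Ind : Finset U → Prop) (X I : Finset U) : Prop :=
  Disjoint I X ∧ rkOf Ind (I ∪ X) = rkOf Ind X + I.card

/-- A base: a maximal independent set. -/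
def BaseOf (Ind : Finset U → Prop) (B : Finset U) : Prop :=
  Ind B ∧ ∀ J, Ind J → B ⊆ J → J = B

/-- A circuit of a general independence system. -/
def CircuitOf (Ind : Finset U → Prop) (C : Finset U) : Prop :=
  ¬ Ind C ∧ ∀ D ⊂ C, Ind D

section Aux
variable {D : Type*} [DecidableEq D] [Fintype D]

/-- With pairwise disjoint families, an element of `F d0` lies in no other `F d`. -/
lemma mem_only {F : D → Finset U}
    (hdisj : ∀ d d' : D, d ≠ d' → Disjoint (F d) (F d'))
    {d0 d : D} {x : U} (hx : x ∈ F d0) (hd : d ≠ d0) : x ∉ F d :=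
  fun hxd => (Finset.disjoint_left.1 (hdisj d d0 hd)) hxd hx

lemma rado_transfer {H : FinMatroid U} {F : D → Finset U}
    (hdisj : ∀ d d' : D, d ≠ d' → Disjoint (F d) (F d'))
    {d0 : D} {x : U} (hx : x ∈ F d0) (hne : (F d0).erase x ≠ ∅) {I : Finset U}
    (hI : H.Indep I)
    (hsub : I ⊆ (Finset.univ.filter (fun d => Function.update F d0 ((F d0).erase x) d ≠ ∅)).biUnion
      (Function.update F d0 ((F d0).erase x)))
    (hcard : ∀ d ∈ Finset.univ.filter (fun d : D => Function.update F d0 ((F d0).erase x) d ≠ ∅),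
      (I ∩ Function.update F d0 ((F d0).erase x) d).card = 1) :
    H.Indep I ∧ I ⊆ (Finset.univ.filter (fun d => F d ≠ ∅)).biUnion F ∧
      ∀ d ∈ Finset.univ.filter (fun d : D => F d ≠ ∅), (I ∩ F d).card = 1 := by
  set F' := Function.update F d0 ((F d0).erase x) with hF'
  have hFd : ∀ d, d ≠ d0 → F' d = F d := fun d hd => Function.update_of_ne hd _ _
  have hF'd0 : F' d0 = (F d0).erase x := Function.update_self _ _ _
  have hDF : (Finset.univ.filter (fun d => F' d ≠ ∅)) = (Finset.univ.filter (fun d => F d ≠ ∅)) := by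
    apply Finset.filter_congr
    intro d _
    by_cases hd : d = d0
    · subst hd
      simp only [hF'd0, hne, ne_eq, not_false_iff, true_iff]
      exact fun h => hne (by simp [h])
    · rw [hFd d hd]
  have hxI : x ∉ I := by
    intro hxI
    have := hsub hxI
    simp only [Finset.mem_biUnion, Finset.mem_filter] at this
    obtain ⟨d, ⟨_, _⟩, hxd⟩ := this
    by_cases hd : d = d0
    · subst hd; rw [hF'd0] at hxd; exact (Finset.notMem_erase x _) hxd
    · rw [hFd d hd] at hxd; exact mem_only hdisj hx hd hxd
  have hinter : ∀ d, I ∩ F' d = I ∩ F d := by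
    intro d
    by_cases hd : d = d0
    · subst hd
      rw [hF'd0]
      ext u
      simp only [Finset.mem_inter, Finset.mem_erase]
      constructor
      · rintro ⟨h1, _, h2⟩; exact ⟨h1, h2⟩
      · rintro ⟨h1, h2⟩; exact ⟨h1, fun h => hxI (h ▸ h1), h2⟩
    · rw [hFd d hd]
  refine ⟨hI, ?_, ?_⟩
  · refine hsub.trans ?_
    rw [hDF]
    intro u hu
    simp only [Finset.mem_biUnion] at hu ⊢
    obtain ⟨d, hd, hud⟩ := hu
    refine ⟨d, hd, ?_⟩
    by_cases hdd : d = d0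
    · subst hdd; rw [hF'd0] at hud; exact Finset.erase_subset _ _ hud
    · rwa [hFd d hdd] at hud
  · intro d hd
    rw [← hinter d]
    exact hcard d (by rwa [hDF])

lemma rado_aux {D : Type*} [DecidableEq D] [Fintype D] (H : FinMatroid U) :
    ∀ n (F : D → Finset U), (∑ d, (F d).card) = n →
    (∀ d d' : D, d ≠ d' → Disjoint (F d) (F d')) →
    (∀ X ⊆ Finset.univ.filter (fun d : D => F d ≠ ∅), X.card ≤ H.rk (X.biUnion F)) →
    ∃ I : Finset U, H.Indep I ∧
      I ⊆ (Finset.univ.filter (fun d => F d ≠ ∅)).biUnion F ∧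
      ∀ d ∈ Finset.univ.filter (fun d : D => F d ≠ ∅), (I ∩ F d).card = 1 := by
  intro n
  induction n using Nat.strong_induction_on with
  | _ n ih =>
  intro F hn hdisj hcond
  set DF := Finset.univ.filter (fun d : D => F d ≠ ∅) with hDF
  by_cases hsing : ∀ d ∈ DF, (F d).card ≤ 1
  · -- base case: all nonempty F d are singletons
    refine ⟨DF.biUnion F, ?_, subset_rfl, ?_⟩
    · apply FinMatroid.indep_of_card_le_rk
      calc (DF.biUnion F).card ≤ ∑ d ∈ DF, (F d).card := Finset.card_biUnion_le
        _ ≤ ∑ _d ∈ DF, 1 := Finset.sum_le_sum hsing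
        _ = DF.card := by simp
        _ ≤ H.rk (DF.biUnion F) := hcond DF subset_rfl
    · intro d hd
      have hsub : F d ⊆ DF.biUnion F := fun u hu => Finset.mem_biUnion.2 ⟨d, hd, hu⟩
      rw [Finset.inter_eq_right.2 hsub]
      have hne : (F d).Nonempty := Finset.nonempty_iff_ne_empty.2 (by simpa [hDF] using hd)
      have h1 : 0 < (F d).card := Finset.card_pos.2 hne
      have h2 := hsing d hd
      omega
  · push_neg at hsing
    obtain ⟨d0, hd0, hcard2⟩ := hsing
    obtain ⟨x, hx, y, hy, hxy⟩ := Finset.one_lt_card.1 hcard2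
    -- two candidate reductions
    have key : ∀ z ∈ F d0,
        (∀ X ⊆ Finset.univ.filter
            (fun d : D => Function.update F d0 ((F d0).erase z) d ≠ ∅),
          X.card ≤ H.rk (X.biUnion (Function.update F d0 ((F d0).erase z)))) →
        ∃ I : Finset U, H.Indep I ∧
          I ⊆ DF.biUnion F ∧ ∀ d ∈ DF, (I ∩ F d).card = 1 := by
      intro z hz hcond'
      set F' := Function.update F d0 ((F d0).erase z) with hF'
      have hne : (F' d0) ≠ ∅ := by
        rw [hF', Function.update_self]
        have : 0 < ((F d0).erase z).card := by
          rw [Finset.card_erase_of_mem hz]; omega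
        intro h; rw [h] at this; simp at this
      have hdisj' : ∀ d d' : D, d ≠ d' → Disjoint (F' d) (F' d') := by
        intro d d' hdd
        have h1 : F' d ⊆ F d := by
          by_cases h : d = d0
          · subst h; rw [hF', Function.update_self]; exact Finset.erase_subset _ _
          · rw [hF', Function.update_of_ne h]
        have h2 : F' d' ⊆ F d' := by
          by_cases h : d' = d0
          · subst h; rw [hF', Function.update_self]; exact Finset.erase_subset _ _
          · rw [hF', Function.update_of_ne h]
        exact (hdisj d d' hdd).mono h1 h2
      have hlt : (∑ d, (F' d).card) < n := by
        rw [← hn]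
        apply Finset.sum_lt_sum
        · intro d _
          by_cases h : d = d0
          · subst h; rw [hF', Function.update_self]
            exact Finset.card_le_card (Finset.erase_subset _ _)
          · rw [hF', Function.update_of_ne h]
        · refine ⟨d0, Finset.mem_univ _, ?_⟩
          rw [hF', Function.update_self, Finset.card_erase_of_mem hz]
          omega
      obtain ⟨I, hI1, hI2, hI3⟩ := ih _ hlt F' rfl hdisj' hcond'
      have hneE : (F d0).erase z ≠ ∅ := by
        rw [hF', Function.update_self] at hne; exact hne
      exact ⟨I, rado_transfer hdisj hz hneE hI1 hI2 hI3⟩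
    by_cases hc1 : ∀ X ⊆ Finset.univ.filter
        (fun d : D => Function.update F d0 ((F d0).erase x) d ≠ ∅),
        X.card ≤ H.rk (X.biUnion (Function.update F d0 ((F d0).erase x)))
    · exact key x hx hc1
    by_cases hc2 : ∀ X ⊆ Finset.univ.filter
        (fun d : D => Function.update F d0 ((F d0).erase y) d ≠ ∅),
        X.card ≤ H.rk (X.biUnion (Function.update F d0 ((F d0).erase y)))
    · exact key y hy hc2
    -- contradiction via submodularity
    exfalso
    push_neg at hc1 hc2
    obtain ⟨X, hXsub, hXlt⟩ := hc1
    obtain ⟨Y, hYsub, hYlt⟩ := hc2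
    set F1 := Function.update F d0 ((F d0).erase x) with hF1
    set F2 := Function.update F d0 ((F d0).erase y) with hF2
    have hF1sub : ∀ d, F1 d ⊆ F d := by
      intro d; by_cases h : d = d0
      · subst h; rw [hF1, Function.update_self]; exact Finset.erase_subset _ _
      · rw [hF1, Function.update_of_ne h]
    have hF2sub : ∀ d, F2 d ⊆ F d := by
      intro d; by_cases h : d = d0
      · subst h; rw [hF2, Function.update_self]; exact Finset.erase_subset _ _
      · rw [hF2, Function.update_of_ne h]
    -- X, Y ⊆ DF
    have hXDF : X ⊆ DF := by
      intro d hd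
      have h0 := hXsub hd
      simp only [Finset.mem_filter, Finset.mem_univ, true_and] at h0
      rw [hDF]
      simp only [Finset.mem_filter, Finset.mem_univ, true_and]
      intro h
      exact h0.ne_empty (Finset.subset_empty.1 (by rw [← h]; exact hF1sub d))
    have hYDF : Y ⊆ DF := by
      intro d hd
      have h0 := hYsub hd
      simp only [Finset.mem_filter, Finset.mem_univ, true_and] at h0
      rw [hDF]
      simp only [Finset.mem_filter, Finset.mem_univ, true_and]
      intro h
      exact h0.ne_empty (Finset.subset_empty.1 (by rw [← h]; exact hF2sub d))
    -- d0 ∈ X and d0 ∈ Y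
    have hd0X : d0 ∈ X := by
      by_contra hd0X
      apply absurd (hcond X hXDF)
      have : X.biUnion F1 = X.biUnion F := by
        apply Finset.biUnion_congr rfl
        intro d hd
        rw [hF1, Function.update_of_ne (fun h => hd0X (by rw [← h]; exact hd))]
      rw [← this]; omega
    have hd0Y : d0 ∈ Y := by
      by_contra hd0Y
      apply absurd (hcond Y hYDF)
      have : Y.biUnion F2 = Y.biUnion F := by
        apply Finset.biUnion_congr rfl
        intro d hd
        rw [hF2, Function.update_of_ne (fun h => hd0Y (by rw [← h]; exact hd))]
      rw [← this]; omega
    set A := X.biUnion F1 with hA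
    set B := Y.biUnion F2 with hB
    have hunion : (X ∪ Y).biUnion F ⊆ A ∪ B := by
      intro u hu
      simp only [Finset.mem_biUnion] at hu
      obtain ⟨d, hd, hud⟩ := hu
      rcases Finset.mem_union.1 hd with hdX | hdY
      · by_cases hdd : d = d0
        · have hud0 : u ∈ F d0 := hdd ▸ hud
          by_cases hux : u = x
          · refine Finset.mem_union.2 (Or.inr (Finset.mem_biUnion.2 ⟨d0, hd0Y, ?_⟩))
            rw [hF2, Function.update_self]
            exact Finset.mem_erase.2 ⟨hux ▸ hxy, hud0⟩
          · refine Finset.mem_union.2 (Or.inl (Finset.mem_biUnion.2 ⟨d0, hd0X, ?_⟩))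
            rw [hF1, Function.update_self]
            exact Finset.mem_erase.2 ⟨hux, hud0⟩
        · refine Finset.mem_union.2 (Or.inl (Finset.mem_biUnion.2 ⟨d, hdX, ?_⟩))
          rw [hF1, Function.update_of_ne hdd]; exact hud
      · by_cases hdd : d = d0
        · have hud0 : u ∈ F d0 := hdd ▸ hud
          by_cases huy : u = y
          · refine Finset.mem_union.2 (Or.inl (Finset.mem_biUnion.2 ⟨d0, hd0X, ?_⟩))
            rw [hF1, Function.update_self]
            exact Finset.mem_erase.2 ⟨huy ▸ hxy.symm, hud0⟩
          · refine Finset.mem_union.2 (Or.inr (Finset.mem_biUnion.2 ⟨d0, hd0Y, ?_⟩))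
            rw [hF2, Function.update_self]
            exact Finset.mem_erase.2 ⟨huy, hud0⟩
        · refine Finset.mem_union.2 (Or.inr (Finset.mem_biUnion.2 ⟨d, hdY, ?_⟩))
          rw [hF2, Function.update_of_ne hdd]; exact hud
    have hinter : ((X ∩ Y).erase d0).biUnion F ⊆ A ∩ B := by
      intro u hu
      simp only [Finset.mem_biUnion, Finset.mem_erase, Finset.mem_inter] at hu
      obtain ⟨d, ⟨hdd0, hdX, hdY⟩, hud⟩ := hu
      refine Finset.mem_inter.2 ⟨Finset.mem_biUnion.2 ⟨d, hdX, ?_⟩, Finset.mem_biUnion.2 ⟨d, hdY, ?_⟩⟩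
      · rw [hF1, Function.update_of_ne hdd0]; exact hud
      · rw [hF2, Function.update_of_ne hdd0]; exact hud
    have h1 : (X ∪ Y).card ≤ H.rk (A ∪ B) :=
      (hcond (X ∪ Y) (Finset.union_subset hXDF hYDF)).trans (FinMatroid.rk_mono hunion)
    have h2 : ((X ∩ Y).erase d0).card ≤ H.rk (A ∩ B) :=
      (hcond ((X ∩ Y).erase d0) ((Finset.erase_subset _ _).trans
        ((Finset.inter_subset_left).trans hXDF))).trans (FinMatroid.rk_mono hinter)
    have hsubmod := H.rk_submodular A B
    have hcardXY : (X ∪ Y).card + (X ∩ Y).card = X.card + Y.card :=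
      Finset.card_union_add_card_inter X Y
    have herase : ((X ∩ Y).erase d0).card = (X ∩ Y).card - 1 :=
      Finset.card_erase_of_mem (Finset.mem_inter.2 ⟨hd0X, hd0Y⟩)
    have hd0XY : 0 < (X ∩ Y).card :=
      Finset.card_pos.2 ⟨d0, Finset.mem_inter.2 ⟨hd0X, hd0Y⟩⟩
    have hXpos : 0 < X.card := Finset.card_pos.2 ⟨d0, hd0X⟩
    have hYpos : 0 < Y.card := Finset.card_pos.2 ⟨d0, hd0Y⟩
    omega

end Aux


theorem rado {D : Type*} [DecidableEq D] [Fintype D]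
    (H : FinMatroid U) (F : D → Finset U)
    (hdisj : ∀ d d' : D, d ≠ d' → Disjoint (F d) (F d')) :
    (∃ I : Finset U, H.Indep I ∧
        I ⊆ (Finset.univ.filter (fun d => F d ≠ ∅)).biUnion F ∧
        ∀ d ∈ Finset.univ.filter (fun d : D => F d ≠ ∅), (I ∩ F d).card = 1) ↔
      ∀ X ⊆ Finset.univ.filter (fun d : D => F d ≠ ∅),
        X.card ≤ H.rk (X.biUnion F) := by

  constructor
  · rintro ⟨I, hI, hsub, hcard⟩ X hX
    have hdisj' : (X : Set D).PairwiseDisjoint (fun d => I ∩ F d) := by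
      intro d _ d' _ hdd
      exact (hdisj d d' hdd).mono Finset.inter_subset_right Finset.inter_subset_right
    have hIX : X.biUnion (fun d => I ∩ F d) ⊆ X.biUnion F :=
      Finset.biUnion_subset.2 fun d hd =>
        (Finset.inter_subset_right).trans (Finset.subset_biUnion_of_mem F hd)
    have hcardeq : (X.biUnion (fun d => I ∩ F d)).card = X.card := by
      rw [Finset.card_biUnion hdisj']
      rw [Finset.sum_congr rfl (fun d hd => hcard d (hX hd))]
      simp
    calc X.card = (X.biUnion (fun d => I ∩ F d)).card := hcardeq.symm
      _ ≤ H.rk (X.biUnion F) := FinMatroid.card_le_rk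
          (H.subset_indep (Finset.biUnion_subset.2 fun d _ => Finset.inter_subset_left) hI)
          hIX
  · exact fun hcond => rado_aux H _ F rfl hdisj hcond
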